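/- Let A, C ∈ U(k) (orthogonal symplectic matrices commuting with J₀) and B ∈ Sp(2k,ℝ) with A = B⁻¹ C B. Define r(B) = B (BᵀB)^{-1/2}. Then A = r(B)⁻¹ C r(B). -/

import Mathlib

open Matrix

/-- For `A, C ∈ U(k)` and `B ∈ Sp(2k,ℝ)` with `A = B⁻¹ C B`, the unitary
retraction `r(B) = B (BᵀB)^{-1/2}` satisfies `A = r(B)⁻¹ C r(B)`. Here `S` denotes the
unique symmetric positive definite square root of `BᵀB`. -/
theorem retraction_conjugation {k : ℕ}
    (J₀ A B C S : Matrix (Fin (2 * k)) (Fin (2 * k)) ℝ)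
    (hJ : J₀ * J₀ = -1)
    (hB : Bᵀ * J₀ * B = J₀) (hBinv : IsUnit B)
    (hAorth : Aᵀ * A = 1) (hCorth : Cᵀ * C = 1)
    (hAJ : A * J₀ = J₀ * A) (hCJ : C * J₀ = J₀ * C)
    (hABC : A = B⁻¹ * C * B)
    (hS : S.PosDef) (hSsymm : Sᵀ = S) (hSsq : S * S = Bᵀ * B) :
    A = (B * S⁻¹)⁻¹ * C * (B * S⁻¹) := by
  have hAAt : A * Aᵀ = 1 := by rwa [mul_eq_one_comm] at hAorth
  have hBA : B * A = C * B := by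
    rw [hABC, ← mul_assoc, ← mul_assoc, Matrix.mul_nonsing_inv _ ((Matrix.isUnit_iff_isUnit_det B).mp hBinv),
      one_mul]
  -- A commutes with BᵀB
  have hcomm : Aᵀ * (Bᵀ * B) * A = Bᵀ * B := by
    have : (B * A)ᵀ * (B * A) = (C * B)ᵀ * (C * B) := by rw [hBA]
    simp only [transpose_mul] at this
    calc Aᵀ * (Bᵀ * B) * A = Aᵀ * Bᵀ * (B * A) := by noncomm_ring
      _ = Bᵀ * Cᵀ * (C * B) := this
      _ = Bᵀ * (Cᵀ * C) * B := by noncomm_ring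
      _ = Bᵀ * B := by rw [hCorth, mul_one]
  -- A commutes with S, via uniqueness of positive semidefinite square roots
  have hT : (Aᵀ * S * A).PosSemidef := by
    have := hS.posSemidef.conjTranspose_mul_mul_same A
    simpa using this
  have hTS : Aᵀ * S * A = S := by
    have key : (Aᵀ * S * A) ^ 2 = S ^ 2 → Aᵀ * S * A = S := by
      open scoped MatrixOrder Matrix.Norms.L2Operator in
      intro h
      rw [sq, sq] at h
      exact (CFC.sqrt_unique h hT.nonneg).symm.trans (CFC.sqrt_unique rfl hS.posSemidef.nonneg)
    apply key
    have : (Aᵀ * S * A) * (Aᵀ * S * A) = Aᵀ * (S * (A * Aᵀ) * S) * A := by noncomm_ring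
    rw [sq, sq, this, hAAt, mul_one, hSsq, hcomm]
  have hAS : A * S = S * A := by
    have := congrArg (fun M => A * M) hTS
    simp only [← mul_assoc, hAAt, one_mul] at this
    exact this.symm ▸ by rw [← this]
  -- invertibility
  have hSdet : IsUnit S.det := isUnit_iff_ne_zero.mpr hS.det_pos.ne'
  have hBdet : IsUnit B.det := (Matrix.isUnit_iff_isUnit_det B).mp hBinv
  have hSinv : S * S⁻¹ = 1 := Matrix.mul_nonsing_inv _ hSdet
  have : (B * S⁻¹)⁻¹ = S * B⁻¹ := by
    rw [Matrix.mul_inv_rev, Matrix.nonsing_inv_nonsing_inv _ hSdet]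
  rw [this]
  calc A = A * (S * S⁻¹) := by rw [hSinv, mul_one]
    _ = S * A * S⁻¹ := by rw [← hAS]; noncomm_ring
    _ = S * (B⁻¹ * C * B) * S⁻¹ := by rw [← hABC]
    _ = S * B⁻¹ * C * (B * S⁻¹) := by noncomm_ring
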